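/- arXiv:1508.03810 — 13 statements merged into one kernel-verified Lean document; each statement's English description precedes it below -/
import Mathlib

section
/- A graph G is a max point-tolerance (MPT) graph if and only if its vertex set admits a linear order < such that for all vertices u < v < w < x, if uw and vx are edges, then vw is an edge. -/
open SimpleGraph Set

/-- An MPT representation: each vertex gets a pointed interval `([s v, e v], p v)`
with `p v ∈ [s v, e v]`, and distinct vertices are adjacent iff both
distinguished points lie in both intervals. -/
def IsMPTRep {V : Type*} (G : SimpleGraph V) (s p e : V → ℝ) : Prop :=
  (∀ v, s v ≤ p v ∧ p v ≤ e v) ∧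
  ∀ u v : V, u ≠ v →
    (G.Adj u v ↔ p u ∈ Set.Icc (s v) (e v) ∧ p v ∈ Set.Icc (s u) (e u))

/-- A graph is a max point-tolerance (MPT) graph if it has an MPT representation. -/
def IsMPT {V : Type*} (G : SimpleGraph V) : Prop := ∃ s p e, IsMPTRep G s p e

/-- A graph is an interval graph if it is the intersection graph of closed real intervals. -/
def IsIntervalGraph {V : Type*} (G : SimpleGraph V) : Prop :=
  ∃ s e : V → ℝ, (∀ v, s v ≤ e v) ∧
    ∀ u v : V, u ≠ v →
      (G.Adj u v ↔ (Set.Icc (s u) (e u) ∩ Set.Icc (s v) (e v)).Nonempty)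

/-- A graph is MPT iff its vertex set admits a linear order `<` such that for all
`u < v < w < x`, if `uw` and `vx` are edges then `vw` is an edge. -/
theorem mpt_iff_mptOrder {V : Type*} [Fintype V] (G : SimpleGraph V) :
    IsMPT G ↔ ∃ lo : LinearOrder V, ∀ u v w x : V,
      lo.lt u v → lo.lt v w → lo.lt w x → G.Adj u w → G.Adj v x → G.Adj v w := by
  classical
  constructor
  · rintro ⟨s, p, e, hint, hadj⟩
    let r := Fintype.equivFin V
    let f : V → ℝ ×ₗ Fin (Fintype.card V) := fun v => toLex (p v, r v)
    have hf : Function.Injective f := by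
      intro a b hab
      have h2 := congrArg (fun x => (ofLex x).2) hab
      exact r.injective h2
    refine ⟨LinearOrder.lift' f hf, ?_⟩
    intro u v w x huv hvw hwx huw hvx
    have hmono : ∀ a b : V, (LinearOrder.lift' f hf).lt a b → p a ≤ p b := by
      intro a b hab
      have : f a < f b := hab
      rcases Prod.Lex.lt_iff.1 this with h | h
      · exact le_of_lt h
      · exact le_of_eq h.1
    have hvw' : v ≠ w := by
      intro h; subst h; exact lt_irrefl (f v) hvw
    have h1 := (hadj u w (by intro h; subst h; exact lt_irrefl (f u) (lt_trans huv hvw))).1 huw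
    have h2 := (hadj v x (by intro h; subst h; exact lt_irrefl (f v) (lt_trans hvw hwx))).1 hvx
    refine (hadj v w hvw').2 ⟨⟨?_, ?_⟩, ⟨?_, ?_⟩⟩
    · exact le_trans h1.1.1 (hmono u v huv)
    · exact le_trans (hmono v w hvw) (hint w).2
    · exact le_trans (hint v).1 (hmono v w hvw)
    · exact le_trans (hmono w x hwx) h2.2.2
  · rintro ⟨lo, hlo⟩
    letI := lo
    let eqv : Fin (Fintype.card V) ≃o V := Fintype.orderIsoFinOfCardEq V rfl
    let p : V → ℝ := fun v => ((eqv.symm v : ℕ) : ℝ)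
    have hp : StrictMono p := by
      intro a b hab
      have : eqv.symm a < eqv.symm b := eqv.symm.strictMono hab
      simp only [p]
      exact_mod_cast this
    let Sv : V → Finset V := fun v =>
      insert v (Finset.univ.filter fun u => G.Adj u v ∧ u < v)
    let Tv : V → Finset V := fun v =>
      insert v (Finset.univ.filter fun u => G.Adj u v ∧ v < u)
    have hSne : ∀ v, ((Sv v).image p).Nonempty :=
      fun v => ⟨p v, Finset.mem_image_of_mem p (Finset.mem_insert_self _ _)⟩
    have hTne : ∀ v, ((Tv v).image p).Nonempty :=
      fun v => ⟨p v, Finset.mem_image_of_mem p (Finset.mem_insert_self _ _)⟩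
    let s : V → ℝ := fun v => ((Sv v).image p).min' (hSne v)
    let e : V → ℝ := fun v => ((Tv v).image p).max' (hTne v)
    have hsv : ∀ v, s v ≤ p v := fun v =>
      Finset.min'_le _ _ (Finset.mem_image_of_mem p (Finset.mem_insert_self _ _))
    have hev : ∀ v, p v ≤ e v := fun v =>
      Finset.le_max' _ _ (Finset.mem_image_of_mem p (Finset.mem_insert_self _ _))
    have hs_le : ∀ u v, G.Adj u v → u < v → s v ≤ p u := by
      intro u v hadj huv
      exact Finset.min'_le _ _ (Finset.mem_image_of_mem p
        (Finset.mem_insert_of_mem (Finset.mem_filter.2 ⟨Finset.mem_univ _, hadj, huv⟩)))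
    have he_ge : ∀ u v, G.Adj u v → u < v → p v ≤ e u := by
      intro u v hadj huv
      exact Finset.le_max' _ _ (Finset.mem_image_of_mem p
        (Finset.mem_insert_of_mem (Finset.mem_filter.2 ⟨Finset.mem_univ _, hadj.symm, huv⟩)))
    refine ⟨s, p, e, fun v => ⟨hsv v, hev v⟩, ?_⟩
    intro u v huv
    -- wlog structure: prove for u < v, then derive
    have key : ∀ a b : V, a < b →
        (G.Adj a b ↔ p a ∈ Set.Icc (s b) (e b) ∧ p b ∈ Set.Icc (s a) (e a)) := by
      intro a b hab
      constructor
      · intro hadj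
        refine ⟨⟨hs_le a b hadj hab, le_trans (le_of_lt (hp hab)) (hev b)⟩,
          ⟨le_trans (hsv a) (le_of_lt (hp hab)), he_ge a b hadj hab⟩⟩
      · rintro ⟨⟨hsb, _⟩, ⟨_, hea⟩⟩
        -- s b ≤ p a gives a' adj b with a' ≤ a
        obtain ⟨pa', hpa'mem, hpa'⟩ := Finset.mem_image.1 (Finset.min'_mem _ (hSne b))
        obtain ⟨pb', hpb'mem, hpb'⟩ := Finset.mem_image.1 (Finset.max'_mem _ (hTne a))
        rcases Finset.mem_insert.1 hpa'mem with h | h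
        · subst h
          exfalso
          have : p pa' ≤ p a := hpa' ▸ hsb
          exact absurd (hp hab) (not_lt.2 this)
        · obtain ⟨hadj1, hlt1⟩ := (Finset.mem_filter.1 h).2
          have ha'a : pa' ≤ a := by
            by_contra hc
            have := hp (not_le.1 hc)
            rw [hpa'] at this
            exact absurd hsb (not_le.2 this)
          rcases Finset.mem_insert.1 hpb'mem with h2 | h2
          · subst h2
            exfalso
            have : p b ≤ p pb' := hpb' ▸ hea
            exact absurd (hp hab) (not_lt.2 this)
          · obtain ⟨hadj2, hlt2⟩ := (Finset.mem_filter.1 h2).2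
            have hbb' : b ≤ pb' := by
              by_contra hc
              have := hp (not_le.1 hc)
              rw [hpb'] at this
              exact absurd hea (not_le.2 this)
            rcases eq_or_lt_of_le ha'a with heq | hlt
            · subst heq; exact hadj1
            · rcases eq_or_lt_of_le hbb' with heq2 | hlt2'
              · subst heq2; exact hadj2.symm
              · exact hlo pa' a b pb' hlt hab hlt2' hadj1 hadj2.symm
    rcases lt_or_gt_of_ne huv with h | h
    · exact key u v h
    · rw [G.adj_comm, key v u h]
      tauto
end

section
/- Every interval graph is a max point-tolerance graph. -/
open SimpleGraph Set

/-- Every interval graph is a max point-tolerance graph. -/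
theorem intervalGraph_isMPT {V : Type*} (G : SimpleGraph V) :
    IsIntervalGraph G → IsMPT G := by
  rintro ⟨s, e, hse, hadj⟩
  refine ⟨fun _ => -2, fun v => Real.arctan (s v), fun v => Real.arctan (e v), ?_, ?_⟩
  · intro v
    refine ⟨?_, Real.arctan_strictMono.monotone (hse v)⟩
    have h1 := Real.neg_pi_div_two_lt_arctan (s v)
    have h2 := Real.pi_le_four
    simp only
    linarith
  · intro u v huv
    rw [hadj u v huv]
    have hne : ∀ a b c d : ℝ, a ≤ b → c ≤ d →
        ((Set.Icc a b ∩ Set.Icc c d).Nonempty ↔ a ≤ d ∧ c ≤ b) := by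
      intro a b c d hab hcd
      rw [Set.Icc_inter_Icc, Set.nonempty_Icc]
      simp only [max_le_iff, le_min_iff]
      constructor
      · rintro ⟨⟨_, h1⟩, h2, _⟩; exact ⟨h2, h1⟩
      · rintro ⟨h1, h2⟩; exact ⟨⟨hab, h2⟩, h1, hcd⟩
    rw [hne _ _ _ _ (hse u) (hse v)]
    have hlow : ∀ x : ℝ, (-2 : ℝ) ≤ Real.arctan x := by
      intro x
      have := Real.neg_pi_div_two_lt_arctan x
      nlinarith [Real.pi_le_four]
    simp only [Set.mem_Icc, hlow, true_and, Real.arctan_strictMono.le_iff_le]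
end

section
/- A graph G is an interval graph if and only if its vertex set admits a linear order < such that for all vertices u < v < w, if uw is an edge, then uv is an edge. -/
open SimpleGraph Set

/-- A graph is an interval graph iff its vertex set admits a linear order `<`
such that for all `u < v < w`, if `uw` is an edge then `uv` is an edge. -/
theorem intervalGraph_iff_iOrder {V : Type*} [Fintype V] (G : SimpleGraph V) :
    IsIntervalGraph G ↔ ∃ lo : LinearOrder V, ∀ u v w : V,
      lo.lt u v → lo.lt v w → G.Adj u w → G.Adj u v := by
  constructor
  · rintro ⟨s, e, hse, hadj⟩
    classical
    set key : V → Lex (ℝ × Fin (Fintype.card V)) :=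
      fun v => toLex (s v, Fintype.equivFin V v) with hkey
    have hinj : Function.Injective key := by
      intro a b hab
      have := congrArg (fun x => (ofLex x).2) hab
      exact (Fintype.equivFin V).injective this
    letI lo' : LinearOrder V := LinearOrder.lift' key hinj
    refine ⟨lo', ?_⟩
    intro u v w huv hvw hAdj
    have hmono : ∀ a b : V, key a < key b → s a ≤ s b := by
      intro a b hab
      rcases Prod.Lex.lt_iff.mp hab with h | h
      · exact le_of_lt h
      · exact le_of_eq h.1
    have hsuv : s u ≤ s v := hmono _ _ huv
    have hsvw : s v ≤ s w := hmono _ _ hvw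
    have hne_uv : u ≠ v := by rintro rfl; exact lt_irrefl _ huv
    have hne_uw : u ≠ w := by
      rintro rfl; exact lt_irrefl (key u) (huv.trans hvw)
    obtain ⟨x, hx1, hx2⟩ := (hadj u w hne_uw).mp hAdj
    refine (hadj u v hne_uv).mpr ⟨s v, ⟨hsuv, ?_⟩, ⟨le_refl _, hse v⟩⟩
    exact le_trans (le_trans hsvw hx2.1) hx1.2
  · rintro ⟨lo, h⟩
    classical
    letI := lo
    set r : V → ℝ := fun v => ((Finset.univ.filter (fun u => u < v)).card : ℝ) with hr
    have rmono : StrictMono r := by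
      intro a b hab
      have hsub : Finset.univ.filter (fun u => u < a) ⊂ Finset.univ.filter (fun u => u < b) := by
        refine Finset.ssubset_iff_of_subset ?_ |>.mpr ⟨a, ?_, ?_⟩
        · intro x hx
          simp only [Finset.mem_filter, Finset.mem_univ, true_and] at hx ⊢
          exact hx.trans hab
        · simp [hab]
        · simp
      have := Finset.card_lt_card hsub
      simp only [hr]
      exact_mod_cast this
    set N : V → Finset V := fun v => Finset.univ.filter (fun w => w = v ∨ (G.Adj v w ∧ v < w))
      with hN
    have hmem : ∀ v, v ∈ N v := by intro v; simp [hN]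
    have hNe : ∀ v, (N v).Nonempty := fun v => ⟨v, hmem v⟩
    refine ⟨r, fun v => (N v).sup' (hNe v) r, ?_, ?_⟩
    · intro v; exact Finset.le_sup' r (hmem v)
    · intro u v huv
      -- symmetric key lemmas
      have key1 : ∀ a b : V, a < b → G.Adj a b →
          (Set.Icc (r a) ((N a).sup' (hNe a) r) ∩
            Set.Icc (r b) ((N b).sup' (hNe b) r)).Nonempty := by
        intro a b hab hAdj
        refine ⟨r b, ⟨(rmono hab).le, ?_⟩, le_refl _, Finset.le_sup' r (hmem b)⟩
        exact Finset.le_sup' r (by simp [hN, hAdj, hab])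
      have key2 : ∀ a b : V, a < b →
          (Set.Icc (r a) ((N a).sup' (hNe a) r) ∩
            Set.Icc (r b) ((N b).sup' (hNe b) r)).Nonempty → G.Adj a b := by
        intro a b hab ⟨x, hx1, hx2⟩
        have hrb : r b ≤ (N a).sup' (hNe a) r := le_trans hx2.1 hx1.2
        obtain ⟨w, hw, hweq⟩ := Finset.exists_mem_eq_sup' (hNe a) r
        rw [hweq] at hrb
        have hbw : b ≤ w := by
          by_contra hc
          exact absurd hrb (not_le.mpr (rmono (lt_of_not_ge hc)))
        simp only [hN, Finset.mem_filter, Finset.mem_univ, true_and] at hw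
        rcases hw with rfl | ⟨hAdj, haw⟩
        · exact absurd (rmono hab) (not_lt.mpr hrb)
        · rcases eq_or_lt_of_le hbw with rfl | hbw
          · exact hAdj
          · exact h a b w hab hbw hAdj
      rcases lt_or_gt_of_ne huv with hlt | hgt
      · exact ⟨fun hA => key1 u v hlt hA, fun hx => key2 u v hlt hx⟩
      · refine ⟨fun hA => ?_, fun hx => (key2 v u hgt ?_).symm⟩
        · rw [Set.inter_comm]; exact key1 v u hgt hA.symm
        · rw [Set.inter_comm]; exact hx
end

section
/- If a linear order σ = (v_1 < ... < v_n) on the vertex set V of a graph G = (V,E) satisfies: E = E_1 ∩ E_2 where σ is an I-order of H_1 = (V, E_1) and the reverse of σ is an I-order of H_2 = (V, E_2), then σ is an MPT-order of G. -/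
open SimpleGraph Set

/-- If `E = E₁ ∩ E₂`, the order is an I-order of `H₁` and its reverse is an
I-order of `H₂`, then the order is an MPT-order of `G`. -/
theorem mptOrder_of_two_iOrders {V : Type*} [LinearOrder V]
    (G H₁ H₂ : SimpleGraph V) (hE : G = H₁ ⊓ H₂)
    (h1 : ∀ u v w : V, u < v → v < w → H₁.Adj u w → H₁.Adj u v)
    (h2 : ∀ u v w : V, w < v → v < u → H₂.Adj u w → H₂.Adj u v) :
    ∀ u v w x : V, u < v → v < w → w < x → G.Adj u w → G.Adj v x → G.Adj v w := by
  subst hE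
  intro u v w x huv hvw hwx huw hvx
  exact ⟨h1 v w x hvw hwx hvx.1, (h2 w v u huv hvw huw.2.symm).symm⟩
end

section
/- A graph G = (V,E) admits an MPT-order σ if and only if there exist graphs H_1 = (V,E_1) and H_2 = (V,E_2) such that E = E_1 ∩ E_2, σ is an I-order of H_1, and the reverse of σ is an I-order of H_2. -/
open SimpleGraph Set

/-- A linear order is an MPT-order of `G` iff `G` is the intersection of two graphs,
one for which the order is an I-order and one for which the reverse order is an I-order. -/
theorem mptOrder_iff_two_iOrders {V : Type*} [LinearOrder V] (G : SimpleGraph V) :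
    (∀ u v w x : V, u < v → v < w → w < x → G.Adj u w → G.Adj v x → G.Adj v w) ↔
    ∃ H₁ H₂ : SimpleGraph V, G = H₁ ⊓ H₂ ∧
      (∀ u v w : V, u < v → v < w → H₁.Adj u w → H₁.Adj u v) ∧
      (∀ u v w : V, w < v → v < u → H₂.Adj u w → H₂.Adj u v) := by
  constructor
  · intro hmpt
    refine ⟨
      { Adj := fun a b => (a < b ∧ ∃ x, b ≤ x ∧ G.Adj a x) ∨ (b < a ∧ ∃ x, a ≤ x ∧ G.Adj b x)
        symm := ⟨by rintro a b (h | h); exact Or.inr h; exact Or.inl h⟩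
        loopless := ⟨by rintro a (⟨h, _⟩ | ⟨h, _⟩) <;> exact lt_irrefl a h⟩ },
      { Adj := fun a b => (a < b ∧ ∃ t, t ≤ a ∧ G.Adj t b) ∨ (b < a ∧ ∃ t, t ≤ b ∧ G.Adj t a)
        symm := ⟨by rintro a b (h | h); exact Or.inr h; exact Or.inl h⟩
        loopless := ⟨by rintro a (⟨h, _⟩ | ⟨h, _⟩) <;> exact lt_irrefl a h⟩ },
      ?_, ?_, ?_⟩
    · ext a b
      simp only [SimpleGraph.inf_adj]
      constructor
      · intro hab
        rcases lt_or_gt_of_ne hab.ne with h | h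
        · exact ⟨Or.inl ⟨h, b, le_refl b, hab⟩, Or.inl ⟨h, a, le_refl a, hab⟩⟩
        · exact ⟨Or.inr ⟨h, a, le_refl a, hab.symm⟩, Or.inr ⟨h, b, le_refl b, hab.symm⟩⟩
      · rintro ⟨h1, h2⟩
        -- wlog a < b
        rcases h1 with ⟨hab, x, hbx, hax⟩ | ⟨hba, x, hax', hbx⟩
        · rcases h2 with ⟨_, t, hta, htb⟩ | ⟨hba, _⟩
          · rcases eq_or_lt_of_le hbx with rfl | hbx
            · exact hax
            rcases eq_or_lt_of_le hta with rfl | hta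
            · exact htb
            exact hmpt t a b x hta hab hbx htb hax
          · exact absurd hab (asymm hba)
        · rcases h2 with ⟨hab, _⟩ | ⟨_, t, htb, hta⟩
          · exact absurd hab (asymm hba)
          · rcases eq_or_lt_of_le hax' with rfl | hax'
            · exact hbx.symm
            rcases eq_or_lt_of_le htb with rfl | htb
            · exact hta.symm
            exact (hmpt t b a x htb hba hax' hta hbx).symm
    · rintro u v w huv hvw (⟨_, x, hwx, hux⟩ | ⟨h, _⟩)
      · exact Or.inl ⟨huv, x, le_trans hvw.le hwx, hux⟩
      · exact absurd (huv.trans hvw) (asymm h)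
    · rintro u v w hwv hvu (⟨h, _⟩ | ⟨_, t, htw, htu⟩)
      · exact absurd (hwv.trans hvu) (asymm h)
      · exact Or.inr ⟨hvu, t, le_trans htw hwv.le, htu⟩
  · rintro ⟨H₁, H₂, rfl, hI1, hI2⟩ u v w x huv hvw hwx huw hvx
    refine ⟨hI1 v w x hvw hwx hvx.1, ?_⟩
    exact (hI2 w v u huv hvw huw.2.symm).symm
end

section
/- If G is an MPT graph and u, v are non-adjacent vertices of G, then the subgraph of G induced by the common neighborhood N(u) ∩ N(v) is an interval graph. -/
open SimpleGraph Set

lemma mpt_helperA {V : Type*} (G : SimpleGraph V) (s p e : V → ℝ)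
    (h : IsMPTRep G s p e) (S : Set V)
    (hle : ∀ w x : S, p w ≤ e x) :
    IsIntervalGraph (G.induce S) := by
  refine ⟨fun w => s w, fun w => p w, fun w => (h.1 w).1, fun w x hwx => ?_⟩
  have hne : (w : V) ≠ x := fun hh => hwx (Subtype.ext hh)
  have hAdj : (G.induce S).Adj w x ↔ G.Adj w x := Iff.rfl
  rw [hAdj, h.2 w x hne, Set.Icc_inter_Icc, Set.nonempty_Icc, sup_le_iff, le_inf_iff, le_inf_iff]
  simp only [Set.mem_Icc]
  constructor
  · rintro ⟨⟨h1, h2⟩, ⟨h3, h4⟩⟩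
    exact ⟨⟨(h.1 (w:V)).1, h3⟩, h1, (h.1 (x:V)).1⟩
  · rintro ⟨⟨_, h3⟩, h1, _⟩
    exact ⟨⟨h1, hle w x⟩, h3, hle x w⟩

lemma mpt_helperB {V : Type*} (G : SimpleGraph V) (s p e : V → ℝ)
    (h : IsMPTRep G s p e) (S : Set V)
    (hle : ∀ w x : S, s w ≤ p x) :
    IsIntervalGraph (G.induce S) := by
  refine ⟨fun w => p w, fun w => e w, fun w => (h.1 w).2, fun w x hwx => ?_⟩
  have hne : (w : V) ≠ x := fun hh => hwx (Subtype.ext hh)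
  have hAdj : (G.induce S).Adj w x ↔ G.Adj w x := Iff.rfl
  rw [hAdj, h.2 w x hne, Set.Icc_inter_Icc, Set.nonempty_Icc, sup_le_iff, le_inf_iff, le_inf_iff]
  simp only [Set.mem_Icc]
  constructor
  · rintro ⟨⟨h1, h2⟩, ⟨h3, h4⟩⟩
    exact ⟨⟨(h.1 (w:V)).2, h2⟩, h4, (h.1 (x:V)).2⟩
  · rintro ⟨⟨_, h2⟩, h4, _⟩
    exact ⟨⟨hle x w, h2⟩, hle w x, h4⟩

/-- In an MPT graph, the common neighborhood of two non-adjacent vertices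
induces an interval graph. -/
theorem commonNeighborhood_interval {V : Type*} (G : SimpleGraph V)
    (hG : IsMPT G) (u v : V) (huv : u ≠ v) (hna : ¬ G.Adj u v) :
    IsIntervalGraph (G.induce (G.neighborSet u ∩ G.neighborSet v)) := by
  obtain ⟨s, p, e, h⟩ := hG
  set S : Set V := G.neighborSet u ∩ G.neighborSet v with hS
  -- facts about members of S
  have hu : ∀ w : S, p u ∈ Set.Icc (s w) (e w) ∧ p w ∈ Set.Icc (s u) (e u) := by
    intro w
    have hadj : G.Adj u w := w.2.1
    exact (h.2 u w hadj.ne).1 hadj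
  have hv : ∀ w : S, p v ∈ Set.Icc (s w) (e w) ∧ p w ∈ Set.Icc (s v) (e v) := by
    intro w
    have hadj : G.Adj v w := w.2.2
    exact (h.2 v w hadj.ne).1 hadj
  -- non-adjacency cases
  rw [h.2 u v huv] at hna
  simp only [Set.mem_Icc, not_and_or, not_le] at hna
  rcases hna with (h1 | h2) | (h3 | h4)
  · -- p u < s v : all points ≥ s v > p u ≥ s w
    refine mpt_helperB G s p e h S (fun w x => ?_)
    calc s (w : V) ≤ p u := (hu w).1.1
      _ ≤ s v := le_of_lt h1
      _ ≤ p x := (hv x).2.1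
  · -- p u > e v : all points ≤ e v < p u ≤ e w
    refine mpt_helperA G s p e h S (fun w x => ?_)
    calc p (w : V) ≤ e v := (hv w).2.2
      _ ≤ p u := le_of_lt h2
      _ ≤ e x := (hu x).1.2
  · -- p v < s u
    refine mpt_helperB G s p e h S (fun w x => ?_)
    calc s (w : V) ≤ p v := (hv w).1.1
      _ ≤ s u := le_of_lt h3
      _ ≤ p x := (hu x).2.1
  · -- p v > e u
    refine mpt_helperA G s p e h S (fun w x => ?_)
    calc p (w : V) ≤ e u := (hu w).2.2
      _ ≤ p v := le_of_lt h4
      _ ≤ e x := (hv x).1.2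
end

section
/- The complete tripartite graph K_{2,2,2} (the octahedron) is not a max point-tolerance graph. -/
open SimpleGraph Set

/-- The complete tripartite graph `K_{2,2,2}` (octahedron): vertices are pairs
`(part, index)` and two vertices are adjacent iff they lie in different parts. -/
def K222 : SimpleGraph (Fin 3 × Fin 2) where
  Adj u v := u.1 ≠ v.1
  symm := ⟨fun u v h => h.symm⟩
  loopless := ⟨fun u h => h rfl⟩

/-- `K_{2,2,2}` is not a max point-tolerance graph. -/
theorem K222_not_MPT : ¬ IsMPT K222 := by
  rintro ⟨s, p, e, hpt, hadj⟩
  -- every interval contains the points of all vertices in other parts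
  have hmem : ∀ v w : Fin 3 × Fin 2, v.1 ≠ w.1 → s v ≤ p w ∧ p w ≤ e v := by
    intro v w h
    have hne : w ≠ v := fun he => h (congrArg Prod.fst he).symm
    have hAdj : K222.Adj w v := fun he => h he.symm
    have := ((hadj w v hne).mp hAdj).1
    exact ⟨this.1, this.2⟩
  -- each pair contributes a strict global extremum
  have key : ∀ i : Fin 3, ∃ x : Fin 3 × Fin 2, x.1 = i ∧
      ((∀ w, w ≠ x → p w < p x) ∨ (∀ w, w ≠ x → p x < p w)) := by
    intro i
    set v : Fin 3 × Fin 2 := (i, 0)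
    set v' : Fin 3 × Fin 2 := (i, 1)
    have hvv' : v ≠ v' := by simp [v, v']
    have hnadj : ¬ K222.Adj v v' := by simp [K222, v, v']
    have hnot := (hadj v v' hvv').not.mp hnadj
    -- everything distinct from v is v' or in another part, and symmetrically
    have hcover : ∀ w : Fin 3 × Fin 2, w ≠ v → w ≠ v' → w.1 ≠ i := by
      rintro ⟨w1, w2⟩ h0 h1 hi
      simp only at hi
      subst hi
      fin_cases w2
      · exact h0 rfl
      · exact h1 rfl
    rw [not_and_or] at hnot
    rcases hnot with h | h
    · -- p v ∉ I_{v'}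
      rw [Set.mem_Icc, not_and_or] at h
      rcases h with h | h
      · push_neg at h
        refine ⟨v, rfl, Or.inr ?_⟩
        intro w hw
        by_cases hw' : w = v'
        · subst hw'
          exact lt_of_lt_of_le h (hpt v').1
        · have := (hmem v' w (by simpa using (hcover w hw hw').symm)).1
          exact lt_of_lt_of_le h this
      · push_neg at h
        refine ⟨v, rfl, Or.inl ?_⟩
        intro w hw
        by_cases hw' : w = v'
        · subst hw'
          exact lt_of_le_of_lt (hpt v').2 h
        · have := (hmem v' w (by simpa using (hcover w hw hw').symm)).2
          exact lt_of_le_of_lt this h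
    · -- p v' ∉ I_v
      rw [Set.mem_Icc, not_and_or] at h
      rcases h with h | h
      · push_neg at h
        refine ⟨v', rfl, Or.inr ?_⟩
        intro w hw
        by_cases hw' : w = v
        · subst hw'
          exact lt_of_lt_of_le h (hpt v).1
        · have := (hmem v w (by simpa using (hcover w hw' hw).symm)).1
          exact lt_of_lt_of_le h this
      · push_neg at h
        refine ⟨v', rfl, Or.inl ?_⟩
        intro w hw
        by_cases hw' : w = v
        · subst hw'
          exact lt_of_le_of_lt (hpt v).2 h
        · have := (hmem v w (by simpa using (hcover w hw' hw).symm)).2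
          exact lt_of_le_of_lt this h
  obtain ⟨a, ha1, ha⟩ := key 0
  obtain ⟨b, hb1, hb⟩ := key 1
  obtain ⟨c, hc1, hc⟩ := key 2
  have hab : a ≠ b := fun h => by simp [h, hb1] at ha1
  have hac : a ≠ c := fun h => by simp [h, hc1] at ha1
  have hbc : b ≠ c := fun h => by simp [h, hc1] at hb1
  rcases ha with ha | ha <;> rcases hb with hb | hb <;> rcases hc with hc | hc <;>
  first
    | (have h1 := ha b hab.symm; have h2 := hb a hab; linarith)
    | (have h1 := ha c hac.symm; have h2 := hc a hac; linarith)
    | (have h1 := hb c hbc.symm; have h2 := hc b hbc; linarith)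
end

section
/- Every cycle C_n (n ≥ 3) is a max point-tolerance graph. Equivalently, the natural cyclic vertex order v_1 < v_2 < ... < v_n of C_n is an MPT-order. -/
open SimpleGraph Set

/-- Adjacency in the cycle graph, in terms of natural-number values. -/
lemma cycle_adj_char {n : ℕ} (hn : 3 ≤ n) (u v : Fin n) :
    (cycleGraph n).Adj u v ↔
      (v.val + 1 = u.val ∨ u.val + 1 = v.val ∨
       (v.val + 1 = n ∧ u.val = 0) ∨ (u.val + 1 = n ∧ v.val = 0)) := by
  obtain ⟨m, rfl⟩ : ∃ m, n = m + 2 := ⟨n - 2, by omega⟩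
  rw [cycleGraph_adj, sub_eq_iff_eq_add, sub_eq_iff_eq_add, Fin.ext_iff, Fin.ext_iff,
    Fin.add_def, Fin.add_def, Fin.val_one]
  simp only [Fin.val_mk]
  have hu := u.isLt
  have hv := v.isLt
  have e1 : (1 + v.val) % (m + 2) = if v.val + 1 = m + 2 then 0 else v.val + 1 := by
    split
    · rename_i h; rw [show 1 + v.val = m + 2 by omega, Nat.mod_self]
    · rw [Nat.mod_eq_of_lt (by omega)]; omega
  have e2 : (1 + u.val) % (m + 2) = if u.val + 1 = m + 2 then 0 else u.val + 1 := by
    split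
    · rename_i h; rw [show 1 + u.val = m + 2 by omega, Nat.mod_self]
    · rw [Nat.mod_eq_of_lt (by omega)]; omega
  rw [e1, e2]
  split_ifs <;> omega

/-- Every cycle `Cₙ` (`n ≥ 3`) is an MPT graph; moreover the natural cyclic
vertex order of `Cₙ` is an MPT-order. -/
theorem cycleGraph_isMPT (n : ℕ) (hn : 3 ≤ n) :
    IsMPT (SimpleGraph.cycleGraph n) ∧
    ∀ i j k l : Fin n, i < j → j < k → k < l →
      (SimpleGraph.cycleGraph n).Adj i k → (SimpleGraph.cycleGraph n).Adj j l →
      (SimpleGraph.cycleGraph n).Adj j k := by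
  constructor
  · refine ⟨fun v => if v.val = 0 then -1 else if v.val + 1 = n then 0 else (v.val : ℝ) - 1,
            fun v => (v.val : ℝ),
            fun v => if v.val = 0 then (n : ℝ) - 1 else (v.val : ℝ) + 1, ?_, ?_⟩
    · intro v
      have hv := v.isLt
      have hv0 : (0:ℕ) ≤ v.val := Nat.zero_le _
      beta_reduce
      split_ifs <;> constructor <;> (rify at *; linarith)
    · intro u v huv
      have huv' : u.val ≠ v.val := fun h => huv (Fin.ext h)
      have hu := u.isLt
      have hv := v.isLt
      have hu0 : (0:ℕ) ≤ u.val := Nat.zero_le _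
      have hv0 : (0:ℕ) ≤ v.val := Nat.zero_le _
      rw [cycle_adj_char hn, Set.mem_Icc, Set.mem_Icc]
      beta_reduce
      split_ifs <;>
        (constructor
         · intro h
           rcases h with h | h | ⟨h, h'⟩ | ⟨h, h'⟩ <;>
             refine ⟨⟨?_, ?_⟩, ?_, ?_⟩ <;>
               first
               | (exfalso; omega)
               | (rify at *; linarith)
         · rintro ⟨⟨h1, h2⟩, h3, h4⟩
           first
           | omega
           | (have k1 : u.val ≤ v.val + 1 := by
                by_contra hc; push_neg at hc; rify at hc; linarith
              have k2 : v.val ≤ u.val + 1 := by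
                by_contra hc; push_neg at hc; rify at hc; linarith
              omega))
  · intro i j k l hij hjk hkl hik hjl
    rw [cycle_adj_char hn] at hik hjl ⊢
    rw [Fin.lt_def] at hij hjk hkl
    have hl := l.isLt
    omega
end

section
/- For every max point-tolerance graph G, the clique cover number γ(G) is at most twice the independence number α(G). -/
open SimpleGraph Set

/-- The clique cover number: the least `k` such that the vertices can be
partitioned into `k` cliques. -/
noncomputable def cliqueCoverNum {V : Type*} [Fintype V] (G : SimpleGraph V) : ℕ :=
  sInf {k | ∃ f : V → Fin k, ∀ u v : V, f u = f v → u = v ∨ G.Adj u v}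

/-- The independence number: the largest size of an independent set. -/
noncomputable def indepNum {V : Type*} [Fintype V] (G : SimpleGraph V) : ℕ :=
  sSup {k | ∃ s : Finset V, s.card = k ∧ ∀ u ∈ s, ∀ v ∈ s, u ≠ v → ¬ G.Adj u v}

section Aux

variable {V : Type*} [DecidableEq V] (G : SimpleGraph V)

open Finset in
/-- Inner greedy: a "round" `K` (all points at most `q`, all right endpoints at
least `q`) can be covered by `t` cliques, where `t` picked vertices have pairwise
disjoint left intervals `[s v, p v]`, and all picks except the first one have
`s` strictly larger than the point of the first pick. -/
lemma mpt_inner (s p e : V → ℝ) (hrep : IsMPTRep G s p e) (q : ℝ) :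
    ∀ K : Finset V, (∀ v ∈ K, p v ≤ q ∧ q ≤ e v) →
    ∃ (t : ℕ) (f : V → ℕ) (T : Finset V),
      T ⊆ K ∧ T.card = t ∧ (∀ v ∈ K, f v < t) ∧
      (∀ u ∈ K, ∀ v ∈ K, f u = f v → u = v ∨ G.Adj u v) ∧
      (∀ x ∈ T, ∀ y ∈ T, x ≠ y → p x < s y ∨ p y < s x) ∧
      (K.Nonempty → ∃ fst ∈ T, ∀ x ∈ T, x ≠ fst → p fst < s x) := by
  classical
  intro K
  induction K using Finset.strongInduction with
  | _ K ih =>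
    intro hK
    rcases K.eq_empty_or_nonempty with hKe | hKne
    · subst hKe
      refine ⟨0, fun _ => 0, ∅, by simp, by simp, by simp, by simp, by simp, ?_⟩
      rintro ⟨x, hx⟩; simp at hx
    · obtain ⟨x, hxK, hxmin⟩ := K.exists_min_image p hKne
      set C := K.filter (fun w => s w ≤ p x) with hCdef
      have hCsub : C ⊆ K := Finset.filter_subset _ _
      have hxC : x ∈ C := Finset.mem_filter.mpr ⟨hxK, (hrep.1 x).1⟩
      have hssub : K \ C ⊂ K := Finset.sdiff_ssubset hCsub ⟨x, hxC⟩
      have hK' : ∀ v ∈ K \ C, p v ≤ q ∧ q ≤ e v :=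
        fun v hv => hK v (Finset.mem_sdiff.mp hv).1
      obtain ⟨t', f', T', hT'sub, hT'card, hb', hcov', hpair', _⟩ := ih (K \ C) hssub hK'
      have hKC : ∀ w ∈ K \ C, p x < s w := by
        intro w hw
        obtain ⟨hwK, hwC⟩ := Finset.mem_sdiff.mp hw
        by_contra h
        exact hwC (Finset.mem_filter.mpr ⟨hwK, not_lt.mp h⟩)
      have hT'x : ∀ y ∈ T', p x < s y := fun y hy => hKC y (hT'sub hy)
      have hxT' : x ∉ T' := by
        intro h
        exact absurd ((hrep.1 x).1) (not_le.mpr (hT'x x h))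
      -- C is a clique
      have hclique : ∀ w ∈ C, ∀ w' ∈ C, w ≠ w' → G.Adj w w' := by
        intro w hw w' hw' hne
        obtain ⟨hwK, hws⟩ := Finset.mem_filter.mp hw
        obtain ⟨hw'K, hw's⟩ := Finset.mem_filter.mp hw'
        refine (hrep.2 w w' hne).mpr ⟨Set.mem_Icc.mpr ⟨?_, ?_⟩, Set.mem_Icc.mpr ⟨?_, ?_⟩⟩
        · exact le_trans hw's (hxmin w hwK)
        · exact le_trans (hK w hwK).1 (hK w' hw'K).2
        · exact le_trans hws (hxmin w' hw'K)
        · exact le_trans (hK w' hw'K).1 (hK w hwK).2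
      refine ⟨t' + 1, fun v => if v ∈ C then 0 else f' v + 1, insert x T', ?_, ?_, ?_, ?_, ?_, ?_⟩
      · intro y hy
        rcases Finset.mem_insert.mp hy with rfl | hy
        · exact hxK
        · exact (Finset.sdiff_subset) (hT'sub hy)
      · rw [Finset.card_insert_of_notMem hxT', hT'card]
      · intro v hv
        by_cases hvC : v ∈ C
        · simp [hvC]
        · have : v ∈ K \ C := Finset.mem_sdiff.mpr ⟨hv, hvC⟩
          simp only [hvC, if_false]
          exact Nat.succ_lt_succ (hb' v this)
      · intro a ha b hb hab
        by_cases haC : a ∈ C <;> by_cases hbC : b ∈ C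
        · exact if h : a = b then Or.inl h else Or.inr (hclique a haC b hbC h)
        · simp [haC, hbC] at hab
        · simp [haC, hbC] at hab
        · simp only [haC, hbC, if_false, Nat.add_right_cancel_iff] at hab
          exact hcov' a (Finset.mem_sdiff.mpr ⟨ha, haC⟩) b (Finset.mem_sdiff.mpr ⟨hb, hbC⟩) hab
      · intro a ha b hb hne
        rcases Finset.mem_insert.mp ha with rfl | ha' <;>
          rcases Finset.mem_insert.mp hb with rfl | hb'
        · exact absurd rfl hne
        · exact Or.inl (hT'x b hb')
        · exact Or.inr (hT'x a ha')
        · exact hpair' a ha' b hb' hne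
      · intro _
        refine ⟨x, Finset.mem_insert_self _ _, ?_⟩
        intro z hz hzx
        rcases Finset.mem_insert.mp hz with rfl | hz'
        · exact absurd rfl hzx
        · exact hT'x z hz'

open Finset in
/-- Outer greedy: any finite vertex set `A` can be covered by `t` cliques together
with two independent sets `S`, `U` inside `A` with `t ≤ |S| + |U|`; moreover every
element of `S` has `s`-value exceeding the point of some element of `A`. -/
lemma mpt_outer (s p e : V → ℝ) (hrep : IsMPTRep G s p e) :
    ∀ A : Finset V,
    ∃ (t : ℕ) (f : V → ℕ) (S U : Finset V),
      (∀ v ∈ A, f v < t) ∧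
      (∀ u ∈ A, ∀ v ∈ A, f u = f v → u = v ∨ G.Adj u v) ∧
      S ⊆ A ∧ U ⊆ A ∧
      (∀ x ∈ S, ∀ y ∈ S, x ≠ y → ¬ G.Adj x y) ∧
      (∀ x ∈ U, ∀ y ∈ U, x ≠ y → ¬ G.Adj x y) ∧
      (∀ y ∈ S, ∃ z ∈ A, p z < s y) ∧
      t ≤ S.card + U.card := by
  classical
  intro A
  induction A using Finset.strongInduction with
  | _ A ih =>
    rcases A.eq_empty_or_nonempty with hAe | hAne
    · subst hAe
      exact ⟨0, fun _ => 0, ∅, ∅, by simp, by simp, by simp, by simp, by simp, by simp,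
        by simp, by simp⟩
    · obtain ⟨u, huA, humin⟩ := A.exists_min_image e hAne
      set q := e u with hq
      set K := A.filter (fun v => p v ≤ q) with hKdef
      have hKsub : K ⊆ A := Finset.filter_subset _ _
      have huK : u ∈ K := Finset.mem_filter.mpr ⟨huA, (hrep.1 u).2⟩
      have hKq : ∀ v ∈ K, p v ≤ q ∧ q ≤ e v := by
        intro v hv
        obtain ⟨hvA, hvp⟩ := Finset.mem_filter.mp hv
        exact ⟨hvp, humin v hvA⟩
      obtain ⟨t₁, f₁, T, hTK, hTcard, hb₁, hcov₁, hpair, hfst'⟩ :=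
        mpt_inner G s p e hrep q K hKq
      obtain ⟨fst, hfstT, hfst⟩ := hfst' ⟨u, huK⟩
      have hssub : A \ K ⊂ A := Finset.sdiff_ssubset hKsub ⟨u, huK⟩
      obtain ⟨t₂, f₂, S', U', hb₂, hcov₂, hS'sub, hU'sub, hS'ind, hU'ind, hS'inv, hcard₂⟩ :=
        ih (A \ K) hssub
      have hA'p : ∀ v ∈ A \ K, q < p v := by
        intro v hv
        obtain ⟨hvA, hvK⟩ := Finset.mem_sdiff.mp hv
        by_contra h
        exact hvK (Finset.mem_filter.mpr ⟨hvA, not_lt.mp h⟩)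
      have hKp : ∀ v ∈ K, p v ≤ q := fun v hv => (hKq v hv).1
      -- nonadjacency helper: p x < s y kills the edge
      have hnadj : ∀ x y : V, x ≠ y → p x < s y → ¬ G.Adj x y := by
        intro x y hxy hlt hadj
        obtain ⟨h1, _⟩ := (hrep.2 x y hxy).mp hadj
        exact absurd (Set.mem_Icc.mp h1).1 (not_le.mpr hlt)
      refine ⟨t₁ + t₂, fun v => if v ∈ K then f₁ v else t₁ + f₂ v,
        (T.erase fst) ∪ S', insert u U', ?_, ?_, ?_, ?_, ?_, ?_, ?_, ?_⟩
      · -- bound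
        intro v hv
        by_cases hvK : v ∈ K
        · simpa [hvK] using Nat.lt_of_lt_of_le (hb₁ v hvK) (Nat.le_add_right _ _)
        · have : v ∈ A \ K := Finset.mem_sdiff.mpr ⟨hv, hvK⟩
          simpa [hvK] using Nat.add_lt_add_left (hb₂ v this) t₁
      · -- cover
        intro a ha b hb hab
        by_cases haK : a ∈ K <;> by_cases hbK : b ∈ K
        · simp only [haK, hbK, if_true] at hab
          exact hcov₁ a haK b hbK hab
        · simp only [haK, hbK, if_true, if_false] at hab
          have := hb₁ a haK; omega
        · simp only [haK, hbK, if_true, if_false] at hab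
          have := hb₁ b hbK; omega
        · simp only [haK, hbK, if_false, Nat.add_left_cancel_iff] at hab
          exact hcov₂ a (Finset.mem_sdiff.mpr ⟨ha, haK⟩) b (Finset.mem_sdiff.mpr ⟨hb, hbK⟩) hab
      · -- S ⊆ A
        intro y hy
        rcases Finset.mem_union.mp hy with hy | hy
        · exact hKsub (hTK (Finset.erase_subset _ _ hy))
        · exact (Finset.sdiff_subset) (hS'sub hy)
      · -- U ⊆ A
        intro y hy
        rcases Finset.mem_insert.mp hy with rfl | hy
        · exact huA
        · exact (Finset.sdiff_subset) (hU'sub hy)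
      · -- S independent
        intro a ha b hb hne
        rcases Finset.mem_union.mp ha with ha' | ha' <;>
          rcases Finset.mem_union.mp hb with hb' | hb'
        · -- both from the round's picks: disjoint left intervals
          rcases hpair a (Finset.erase_subset _ _ ha') b (Finset.erase_subset _ _ hb') hne with
            h | h
          · exact hnadj a b hne h
          · intro hadj
            exact hnadj b a hne.symm h (hadj.symm)
        · -- a in round, b later
          obtain ⟨z, hz, hzs⟩ := hS'inv b hb'
          have hpa : p a ≤ q := hKp a (hTK (Finset.erase_subset _ _ ha'))
          exact hnadj a b hne (lt_of_le_of_lt hpa (lt_trans (hA'p z hz) hzs))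
        · -- b in round, a later
          obtain ⟨z, hz, hzs⟩ := hS'inv a ha'
          have hpb : p b ≤ q := hKp b (hTK (Finset.erase_subset _ _ hb'))
          intro hadj
          exact hnadj b a hne.symm (lt_of_le_of_lt hpb (lt_trans (hA'p z hz) hzs))
            (hadj.symm)
        · exact hS'ind a ha' b hb' hne
      · -- U independent
        intro a ha b hb hne
        rcases Finset.mem_insert.mp ha with rfl | ha' <;>
          rcases Finset.mem_insert.mp hb with rfl | hb'
        · exact absurd rfl hne
        · -- a = u, b later : p b > e u
          intro hadj
          obtain ⟨_, h2⟩ := (hrep.2 a b hne).mp hadj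
          have := (Set.mem_Icc.mp h2).2
          exact absurd this (not_le.mpr (hA'p b (hU'sub hb')))
        · intro hadj
          obtain ⟨h1, _⟩ := (hrep.2 a b hne).mp hadj
          have := (Set.mem_Icc.mp h1).2
          exact absurd this (not_le.mpr (hA'p a (hU'sub ha')))
        · exact hU'ind a ha' b hb' hne
      · -- invariant for S
        intro y hy
        rcases Finset.mem_union.mp hy with hy' | hy'
        · exact ⟨fst, hKsub (hTK hfstT), hfst y (Finset.erase_subset _ _ hy')
            (Finset.ne_of_mem_erase hy')⟩
        · obtain ⟨z, hz, hzs⟩ := hS'inv y hy'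
          exact ⟨z, (Finset.sdiff_subset) hz, hzs⟩
      · -- cardinality accounting
        have hdisj : Disjoint (T.erase fst) S' := by
          refine Finset.disjoint_left.mpr ?_
          intro a ha hb
          have h1 : a ∈ K := hTK (Finset.erase_subset _ _ ha)
          have h2 : a ∈ A \ K := hS'sub hb
          exact (Finset.mem_sdiff.mp h2).2 h1
        have huU' : u ∉ U' := by
          intro h
          exact (Finset.mem_sdiff.mp (hU'sub h)).2 huK
        rw [Finset.card_union_of_disjoint hdisj, Finset.card_erase_of_mem hfstT,
          Finset.card_insert_of_notMem huU']
        have hT1 : 1 ≤ T.card := Finset.card_pos.mpr ⟨fst, hfstT⟩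
        omega

end Aux

/-- For every MPT graph, the clique cover number is at most twice the
independence number. -/
theorem cliqueCoverNum_le_two_mul_indepNum {V : Type*} [Fintype V]
    (G : SimpleGraph V) (hG : IsMPT G) :
    cliqueCoverNum G ≤ 2 * _root_.indepNum G := by
  classical
  obtain ⟨s, p, e, hrep⟩ := hG
  obtain ⟨t, f, S, U, hb, hcov, _, _, hSind, hUind, _, hcard⟩ :=
    mpt_outer G s p e hrep Finset.univ
  have h1 : cliqueCoverNum G ≤ t := by
    apply Nat.sInf_le
    refine ⟨fun v => ⟨f v, hb v (Finset.mem_univ v)⟩, ?_⟩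
    intro a b hab
    exact hcov a (Finset.mem_univ a) b (Finset.mem_univ b)
      (by simpa using congrArg Fin.val hab)
  have hbdd : BddAbove {k | ∃ s : Finset V, s.card = k ∧
      ∀ u ∈ s, ∀ v ∈ s, u ≠ v → ¬ G.Adj u v} := by
    refine ⟨Fintype.card V, ?_⟩
    rintro k ⟨s, rfl, -⟩
    exact Finset.card_le_univ s
  have hS : S.card ≤ _root_.indepNum G := le_csSup hbdd ⟨S, rfl, hSind⟩
  have hU : U.card ≤ _root_.indepNum G := le_csSup hbdd ⟨U, rfl, hUind⟩
  omega
end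

section
/- Every complete bipartite graph K_{m,n} is a max point-tolerance graph. -/
open SimpleGraph Set

/-- Every complete bipartite graph is a max point-tolerance graph. -/
theorem completeBipartite_isMPT (m n : ℕ) :
    IsMPT (completeBipartiteGraph (Fin m) (Fin n)) := by
  refine ⟨Sum.elim (fun _ => -((n : ℝ) + 1)) (fun j => -((j : ℝ) + 1)),
    Sum.elim (fun i => (i : ℝ)) (fun j => -((j : ℝ) + 1)),
    Sum.elim (fun i => (i : ℝ)) (fun _ => (m : ℝ)), ?_, ?_⟩
  · rintro (i | j)
    · have h1 : (0:ℝ) ≤ (i : ℝ) := by positivity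
      have h2 : (0:ℝ) ≤ (n : ℝ) := by positivity
      exact ⟨by simp only [Sum.elim_inl]; linarith, le_refl _⟩
    · have h1 : (0:ℝ) ≤ (j : ℝ) := by positivity
      have h2 : (0:ℝ) ≤ (m : ℝ) := by positivity
      exact ⟨le_refl _, by simp only [Sum.elim_inr]; linarith⟩
  · rintro (i | j) (i' | j') huv
    · -- left-left: not adjacent
      simp only [Sum.elim_inl, Set.mem_Icc]
      constructor
      · intro h; simp at h
      · rintro ⟨⟨-, h1⟩, ⟨-, h2⟩⟩
        exact absurd (Fin.ext (by exact_mod_cast le_antisymm h1 h2))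
          (fun h : i = i' => huv (by rw [h]))
    · -- left-right: adjacent
      simp only [Sum.elim_inl, Sum.elim_inr, Set.mem_Icc]
      have hi0 : (0:ℝ) ≤ (i : ℝ) := by positivity
      have him : (i : ℝ) < m := by exact_mod_cast i.isLt
      have hjn : (j' : ℝ) < n := by exact_mod_cast j'.isLt
      have hj0 : (0:ℝ) ≤ (j' : ℝ) := by positivity
      constructor
      · intro _; exact ⟨⟨by linarith, by linarith⟩, ⟨by linarith, by linarith⟩⟩
      · intro _; simp
    · -- right-left: adjacent
      simp only [Sum.elim_inl, Sum.elim_inr, Set.mem_Icc]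
      have hi0 : (0:ℝ) ≤ (i' : ℝ) := by positivity
      have him : (i' : ℝ) < m := by exact_mod_cast i'.isLt
      have hjn : (j : ℝ) < n := by exact_mod_cast j.isLt
      have hj0 : (0:ℝ) ≤ (j : ℝ) := by positivity
      constructor
      · intro _; exact ⟨⟨by linarith, by linarith⟩, ⟨by linarith, by linarith⟩⟩
      · intro _; simp
    · -- right-right: not adjacent
      simp only [Sum.elim_inr, Set.mem_Icc]
      constructor
      · intro h; simp at h
      · rintro ⟨⟨h1, -⟩, ⟨h2, -⟩⟩
        have : (j : ℝ) = (j' : ℝ) := by linarith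
        exact absurd (Fin.ext (by exact_mod_cast this))
          (fun h : j = j' => huv (by rw [h]))
end

section
/- If G is an MPT graph with a fixed MPT representation and v is a vertex of G, then the neighborhood N(v) can be partitioned into sets V_L and V_R such that the induced subgraphs G[V_L] and G[V_R] are interval graphs. -/
open SimpleGraph Set

/-- Given an MPT representation of `G` (with distinct distinguished points) and a
vertex `v`, the neighborhood of `v` is partitioned into `V_L` (neighbors with
point left of `p v`) and `V_R` (neighbors with point right of `p v`), and both
parts induce interval graphs. -/
theorem neighborhood_partition_interval {V : Type*} (G : SimpleGraph V)
    (s p e : V → ℝ) (hrep : IsMPTRep G s p e) (hinj : Function.Injective p)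
    (v : V) :
    let VL : Set V := {u | u ∈ G.neighborSet v ∧ p u < p v}
    let VR : Set V := {u | u ∈ G.neighborSet v ∧ p v < p u}
    VL ∪ VR = G.neighborSet v ∧ Disjoint VL VR ∧
      IsIntervalGraph (G.induce VL) ∧ IsIntervalGraph (G.induce VR) := by

  intro VL VR
  obtain ⟨hpt, hadj⟩ := hrep
  have key : ∀ u, u ∈ G.neighborSet v → s u ≤ p u ∧ p u ≤ e u ∧ s u ≤ p v ∧ p v ≤ e u ∧ p u ≠ p v := by
    intro u hu
    have hne : v ≠ u := G.ne_of_adj hu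
    have := (hadj v u hne).mp hu
    exact ⟨(hpt u).1, (hpt u).2, this.1.1, this.1.2, fun h => hne (hinj h.symm)⟩
  refine ⟨?_, ?_, ?_, ?_⟩
  · ext u
    simp only [VL, VR, Set.mem_union, Set.mem_setOf_eq]
    constructor
    · rintro (⟨h, _⟩ | ⟨h, _⟩) <;> exact h
    · intro h
      rcases lt_or_gt_of_ne (key u h).2.2.2.2 with h1 | h1
      · exact Or.inl ⟨h, h1⟩
      · exact Or.inr ⟨h, h1⟩
  · rw [Set.disjoint_left]
    rintro u ⟨_, h1⟩ ⟨_, h2⟩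
    exact absurd (h1.trans h2) (lt_irrefl _)
  · refine ⟨fun u => s u.val, fun u => p u.val, fun u => (hpt u.val).1, ?_⟩
    rintro ⟨u, hu, hul⟩ ⟨w, hw, hwl⟩ hne
    have hne' : u ≠ w := fun h => hne (Subtype.ext h)
    obtain ⟨hsu, hue, hsv, hve, -⟩ := key u hu
    obtain ⟨hsw, hwe, hsv', hve', -⟩ := key w hw
    have hpne : p u ≠ p w := fun h => hne' (hinj h)
    rw [comap_adj, Function.Embedding.coe_subtype, hadj u w hne',
      Set.Icc_inter_Icc, Set.nonempty_Icc, Set.mem_Icc, Set.mem_Icc,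
      max_le_iff, le_min_iff, le_min_iff]
    rcases lt_or_gt_of_ne hpne with h | h <;>
      (constructor
       · rintro ⟨⟨h1, h2⟩, h3, h4⟩
         exact ⟨⟨by linarith, by linarith⟩, by linarith, by linarith⟩
       · rintro ⟨⟨h1, h2⟩, h3, h4⟩
         exact ⟨⟨by linarith, by linarith⟩, by linarith, by linarith⟩)
  · refine ⟨fun u => p u.val, fun u => e u.val, fun u => (hpt u.val).2, ?_⟩
    rintro ⟨u, hu, hul⟩ ⟨w, hw, hwl⟩ hne
    have hne' : u ≠ w := fun h => hne (Subtype.ext h)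
    obtain ⟨hsu, hue, hsv, hve, -⟩ := key u hu
    obtain ⟨hsw, hwe, hsv', hve', -⟩ := key w hw
    have hpne : p u ≠ p w := fun h => hne' (hinj h)
    rw [comap_adj, Function.Embedding.coe_subtype, hadj u w hne',
      Set.Icc_inter_Icc, Set.nonempty_Icc, Set.mem_Icc, Set.mem_Icc,
      max_le_iff, le_min_iff, le_min_iff]
    rcases lt_or_gt_of_ne hpne with h | h <;>
      (constructor
       · rintro ⟨⟨h1, h2⟩, h3, h4⟩
         exact ⟨⟨by linarith, by linarith⟩, by linarith, by linarith⟩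
       · rintro ⟨⟨h1, h2⟩, h3, h4⟩
         exact ⟨⟨by linarith, by linarith⟩, by linarith, by linarith⟩)
end

section
/- Let σ be an MPT-order of G = (V,E) constructed as a linear order v_1 < ... < v_n. Define for each i: s_i = min(i, min{j : v_j v_i ∈ E}) and e_i = max(i, max{j : v_i v_j ∈ E}), with p_i = i. Then the pointed intervals ([s_i, e_i], p_i) form an MPT representation of G; that is, for i < j, v_i v_j ∈ E iff s_j ≤ i and e_i ≥ j. -/
open SimpleGraph Set

/-- From an MPT-order `v_0 < … < v_{n-1}` of `G`, defining
`s i = min(i, min {j | v_j v_i ∈ E})` and `e i = max(i, max {j | v_i v_j ∈ E})`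
with `p i = i` gives an MPT representation: for `i < j`,
`v_i v_j ∈ E` iff `s j ≤ i` and `j ≤ e i`. -/
theorem mptOrder_construction_is_rep {n : ℕ} (G : SimpleGraph (Fin n))
    (hord : ∀ i j k l : Fin n, i < j → j < k → k < l →
      G.Adj i k → G.Adj j l → G.Adj j k)
    (s e : Fin n → Fin n)
    (hs_le : ∀ i, s i ≤ i)
    (hs_min : ∀ i j : Fin n, G.Adj j i → s i ≤ j)
    (hs_mem : ∀ i, s i = i ∨ G.Adj (s i) i)
    (he_le : ∀ i, i ≤ e i)
    (he_max : ∀ i j : Fin n, G.Adj i j → j ≤ e i)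
    (he_mem : ∀ i, e i = i ∨ G.Adj i (e i)) :
    ∀ i j : Fin n, i < j → (G.Adj i j ↔ s j ≤ i ∧ j ≤ e i) := by
  intro i j hij
  constructor
  · intro h
    exact ⟨hs_min j i h, he_max i j h⟩
  · rintro ⟨h1, h2⟩
    have hsj : G.Adj (s j) j := by
      rcases hs_mem j with h | h
      · exfalso; exact absurd (h ▸ h1) (not_le.2 hij)
      · exact h
    have hei : G.Adj i (e i) := by
      rcases he_mem i with h | h
      · exfalso; exact absurd (h ▸ h2) (not_le.2 hij)
      · exact h
    rcases eq_or_lt_of_le h1 with h1' | h1'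
    · exact h1' ▸ hsj
    rcases eq_or_lt_of_le h2 with h2' | h2'
    · exact h2' ▸ hei
    exact hord (s j) i j (e i) h1' hij h2' hsj hei
end

section
/- In any MPT representation of a graph G in which all distinguished points are distinct, ordering the vertices by their distinguished points yields an MPT-order: for vertices u, v, w, x with p_u < p_v < p_w < p_x, if uw and vx are edges, then vw is an edge. -/
open SimpleGraph Set

/-- In any MPT representation with distinct distinguished points, ordering the
vertices by their distinguished points yields an MPT-order. -/
theorem mptRep_order_is_mptOrder {V : Type*} (G : SimpleGraph V)
    (s p e : V → ℝ) (hrep : IsMPTRep G s p e) (hinj : Function.Injective p) :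
    ∀ u v w x : V, p u < p v → p v < p w → p w < p x →
      G.Adj u w → G.Adj v x → G.Adj v w := by
  obtain ⟨hpt, hadj⟩ := hrep
  intro u v w x huv hvw hwx huw hvx
  have hne_uw : u ≠ w := fun h => absurd (h ▸ rfl) (ne_of_lt (huv.trans hvw))
  have hne_vx : v ≠ x := fun h => absurd (h ▸ rfl) (ne_of_lt (hvw.trans hwx))
  have hne_vw : v ≠ w := fun h => absurd (h ▸ rfl) (ne_of_lt hvw)
  obtain ⟨⟨hsw, _⟩, ⟨_, heu⟩⟩ := (hadj u w hne_uw).1 huw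
  obtain ⟨_, ⟨_, hev⟩⟩ := (hadj v x hne_vx).1 hvx
  exact (hadj v w hne_vw).2
    ⟨⟨hsw.trans huv.le, hvw.le.trans (hpt w).2⟩,
     ⟨(hpt v).1.trans hvw.le, hwx.le.trans hev⟩⟩
end
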